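/- arXiv:1011.1754 — 4 statements merged into one kernel-verified Lean document; each statement's English description precedes it below -/
import Mathlib

section
/- For every positive integer r, the function E_r(t) = (2/r)(Γ((r+1)/2)/Γ(r/2))^2 Σ_{k=0}^∞ [(1·3···(2k−1))^2/((2·4···2k)((r+2)···(r+2k)))] t^{2k+1} satisfies E_r(1) = 1. -/
open Real Finset

/-- The `k`-th Taylor coefficient of the function `E_r` (up to the global factor). -/
noncomputable def grCoef (r k : ℕ) : ℝ :=
  (∏ i ∈ Finset.range k, (2 * (i : ℝ) + 1)) ^ 2 /
    ((∏ i ∈ Finset.range k, (2 * (i : ℝ) + 2)) *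
      (∏ i ∈ Finset.range k, ((r : ℝ) + 2 * (i : ℝ) + 2)))

/-- The function `E_r` from the matrix Grothendieck identity. -/
noncomputable def Er (r : ℕ) (t : ℝ) : ℝ :=
  (2 / (r : ℝ)) * (Real.Gamma (((r : ℝ) + 1) / 2) / Real.Gamma ((r : ℝ) / 2)) ^ 2 *
    ∑' k : ℕ, grCoef r k * t ^ (2 * k + 1)

/-! ### Auxiliary sequence `dd k = (2k-1)!! / (2k)!!` -/

noncomputable def dd (k : ℕ) : ℝ := ∏ i ∈ Finset.range k, ((2*(i:ℝ)+1)/(2*(i:ℝ)+2))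

lemma dd_zero : dd 0 = 1 := by simp [dd]

lemma dd_succ (k : ℕ) : dd (k+1) = dd k * ((2*(k:ℝ)+1)/(2*(k:ℝ)+2)) := by
  unfold dd; rw [Finset.prod_range_succ]

lemma dd_pos (k : ℕ) : 0 < dd k := by
  refine Finset.prod_pos fun i _ => by positivity

lemma dd_le_one (k : ℕ) : dd k ≤ 1 := by
  refine Finset.prod_le_one (fun i _ => by positivity) (fun i _ => ?_)
  rw [div_le_one (by positivity)]; linarith

lemma dd_rec (k : ℕ) : ((k:ℝ)+1) * dd (k+1) = ((k:ℝ) + 1/2) * dd k := by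
  rw [dd_succ]; field_simp

lemma dd_sq_le (k : ℕ) : dd k ^ 2 * (2*(k:ℝ)+1) ≤ 1 := by
  induction k with
  | zero => simp [dd_zero]
  | succ k ih =>
    have hd := dd_pos k
    rw [dd_succ]
    push_cast
    have e : (dd k * ((2*(k:ℝ)+1)/(2*(k:ℝ)+2)))^2 * (2*((k:ℝ)+1)+1)
        = (dd k^2*(2*(k:ℝ)+1)) * ((2*(k:ℝ)+1)*(2*(k:ℝ)+3)/(2*(k:ℝ)+2)^2) := by
      field_simp; ring
    rw [e]
    have h2 : (2*(k:ℝ)+1)*(2*(k:ℝ)+3)/(2*(k:ℝ)+2)^2 ≤ 1 := by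
      rw [div_le_one (by positivity)]; nlinarith [sq_nonneg ((k:ℝ)+1)]
    exact mul_le_one₀ ih (by positivity) h2

lemma twoT (m : ℕ) : 2 * (∑ j ∈ Finset.range (m+1), (j:ℝ) * dd j * dd (m-j))
    = (m:ℝ) * ∑ j ∈ Finset.range (m+1), dd j * dd (m-j) := by
  have hrefl : (∑ j ∈ Finset.range (m+1), (j:ℝ) * dd j * dd (m-j))
      = ∑ j ∈ Finset.range (m+1), ((m:ℝ) - (j:ℝ)) * dd j * dd (m-j) := by
    rw [← Finset.sum_range_reflect (fun j => (j:ℝ) * dd j * dd (m-j)) (m+1)]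
    refine Finset.sum_congr rfl fun j hj => ?_
    have hj' : j ≤ m := Nat.lt_succ_iff.mp (Finset.mem_range.mp hj)
    have h1 : m + 1 - 1 - j = m - j := by omega
    have h2 : m - (m - j) = j := by omega
    rw [h1, h2, Nat.cast_sub hj']
    ring
  have : (∑ j ∈ Finset.range (m+1), (j:ℝ) * dd j * dd (m-j))
        + (∑ j ∈ Finset.range (m+1), (j:ℝ) * dd j * dd (m-j))
      = ∑ j ∈ Finset.range (m+1), (m:ℝ) * (dd j * dd (m-j)) := by
    nth_rewrite 2 [hrefl]
    rw [← Finset.sum_add_distrib]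
    exact Finset.sum_congr rfl fun j hj => by ring
  rw [two_mul, this, ← Finset.mul_sum]

lemma SS (n : ℕ) : ∑ j ∈ Finset.range (n+1), dd j * dd (n-j) = 1 := by
  induction n with
  | zero => simp [dd_zero]
  | succ n ih =>
    have step : (∑ j ∈ Finset.range (n+2), (j:ℝ) * dd j * dd (n+1-j))
        = (∑ j ∈ Finset.range (n+1), (j:ℝ) * dd j * dd (n-j))
          + (1/2) * ∑ j ∈ Finset.range (n+1), dd j * dd (n-j) := by
      rw [Finset.sum_range_succ' (fun j => (j:ℝ) * dd j * dd (n+1-j)) (n+1)]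
      simp only [Nat.cast_zero, zero_mul, add_zero]
      calc ∑ i ∈ Finset.range (n+1), ((i:ℕ)+1 : ℕ) * dd (i+1) * dd (n+1-(i+1))
          = ∑ i ∈ Finset.range (n+1), (((i:ℝ) + 1/2) * dd i) * dd (n-i) := by
            refine Finset.sum_congr rfl fun i hi => ?_
            have h3 : n + 1 - (i+1) = n - i := by omega
            rw [h3]
            push_cast
            rw [dd_rec]
        _ = _ := by
            rw [Finset.mul_sum, ← Finset.sum_add_distrib]
            exact Finset.sum_congr rfl fun j hj => by ring
    have e1 := twoT (n+1)
    have e2 := twoT n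
    rw [ih] at e2
    have e1' : ((n:ℝ)+1) * ∑ j ∈ Finset.range (n+2), dd j * dd (n+1-j)
        = (n:ℝ) + 1 := by
      push_cast at e1
      rw [step, ih] at e1
      linarith
    have hne : ((n:ℝ)+1) ≠ 0 := by positivity
    have h4 : ((n:ℝ)+1) * (∑ j ∈ Finset.range (n+2), dd j * dd (n+1-j)) = ((n:ℝ)+1) * 1 := by
      rw [e1', mul_one]
    exact mul_left_cancel₀ hne h4

/-! ### Generating function of `dd` -/

lemma dd_summable {x : ℝ} (h0 : 0 ≤ x) (h1 : x < 1) : Summable (fun k => dd k * x^k) := by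
  refine Summable.of_nonneg_of_le (fun k => mul_nonneg (dd_pos k).le (pow_nonneg h0 k))
    (fun k => ?_) (summable_geometric_of_lt_one h0 h1)
  calc dd k * x^k ≤ 1 * x^k := by
        have h2 : (0:ℝ) ≤ x^k := by positivity
        nlinarith [dd_le_one k]
    _ = x^k := one_mul _

lemma dd_tsum_sq {x : ℝ} (h0 : 0 ≤ x) (h1 : x < 1) :
    (∑' k, dd k * x^k) * (∑' k, dd k * x^k) = (1-x)⁻¹ := by
  have hs := dd_summable h0 h1
  have hprod : Summable (fun p : ℕ × ℕ => (dd p.1 * x^p.1) * (dd p.2 * x^p.2)) :=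
    hs.mul_of_nonneg hs (fun k => mul_nonneg (dd_pos k).le (pow_nonneg h0 k))
      (fun k => mul_nonneg (dd_pos k).le (pow_nonneg h0 k))
  rw [Summable.tsum_mul_tsum_eq_tsum_sum_range hs hs hprod]
  have : ∀ n : ℕ, (∑ k ∈ Finset.range (n+1), (dd k * x^k) * (dd (n-k) * x^(n-k))) = x^n := by
    intro n
    have : ∀ k ∈ Finset.range (n+1), (dd k * x^k) * (dd (n-k) * x^(n-k))
        = (dd k * dd (n-k)) * x^n := by
      intro k hk
      have hk' : k ≤ n := Nat.lt_succ_iff.mp (Finset.mem_range.mp hk)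
      have : x^k * x^(n-k) = x^n := by
        rw [← pow_add]; congr 1; omega
      calc (dd k * x^k) * (dd (n-k) * x^(n-k)) = (dd k * dd (n-k)) * (x^k * x^(n-k)) := by ring
        _ = (dd k * dd (n-k)) * x^n := by rw [this]
    rw [Finset.sum_congr rfl this, ← Finset.sum_mul, SS n, one_mul]
  rw [tsum_congr this, tsum_geometric_of_lt_one h0 h1]

lemma dd_tsum {x : ℝ} (h0 : 0 ≤ x) (h1 : x < 1) :
    ∑' k, dd k * x^k = (1-x) ^ (-(1/2) : ℝ) := by
  have hnn : 0 ≤ ∑' k, dd k * x^k :=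
    tsum_nonneg (fun k => mul_nonneg (dd_pos k).le (pow_nonneg h0 k))
  have h2 := dd_tsum_sq h0 h1
  have h1x : 0 < 1 - x := by linarith
  have heq : ∑' k, dd k * x^k = Real.sqrt ((1-x)⁻¹) := by
    rw [← h2, Real.sqrt_mul_self hnn]
  rw [heq, Real.sqrt_inv, Real.sqrt_eq_rpow, ← Real.rpow_neg (by linarith : (0:ℝ) ≤ 1-x)]

/-! ### The Beta integral over the reals -/

lemma realBeta {u v : ℝ} (hu : 0 < u) (hv : 0 < v) :
    ∫ x in (0:ℝ)..1, x ^ (u-1) * (1-x) ^ (v-1) =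
      Real.Gamma u * Real.Gamma v / Real.Gamma (u+v) := by
  have key := Complex.Gamma_mul_Gamma_eq_betaIntegral
    (s := (u:ℂ)) (t := (v:ℂ)) (by simpa using hu) (by simpa using hv)
  have hbeta : Complex.betaIntegral (u:ℂ) (v:ℂ)
      = ((∫ x in (0:ℝ)..1, x ^ (u-1) * (1-x) ^ (v-1) : ℝ) : ℂ) := by
    rw [Complex.betaIntegral, ← intervalIntegral.integral_ofReal]
    refine intervalIntegral.integral_congr fun x hx => ?_
    rw [Set.uIcc_of_le (by norm_num : (0:ℝ) ≤ 1)] at hx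
    obtain ⟨hx0, hx1⟩ := hx
    have e1 : ((u:ℂ)-1) = ((u-1 : ℝ):ℂ) := by push_cast; ring
    have e2 : (1 - (x:ℂ)) = ((1-x : ℝ):ℂ) := by push_cast; ring
    have e3 : ((v:ℂ)-1) = ((v-1 : ℝ):ℂ) := by push_cast; ring
    rw [e1, e2, e3, ← Complex.ofReal_cpow hx0, ← Complex.ofReal_cpow (by linarith : (0:ℝ) ≤ 1-x),
      ← Complex.ofReal_mul]
  rw [hbeta] at key
  have h1 : ((u:ℂ)+(v:ℂ)) = ((u+v : ℝ) : ℂ) := by push_cast; ring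
  rw [h1, Complex.Gamma_ofReal, Complex.Gamma_ofReal, Complex.Gamma_ofReal] at key
  have key2 : (Real.Gamma u * Real.Gamma v : ℝ)
      = (Real.Gamma (u+v) * ∫ x in (0:ℝ)..1, x ^ (u-1) * (1-x) ^ (v-1) : ℝ) := by
    exact_mod_cast key
  have hG : Real.Gamma (u+v) ≠ 0 := (Real.Gamma_pos_of_pos (by linarith)).ne'
  field_simp
  linarith [key2]

/-! ### `grCoef` in terms of `dd` and Gamma values -/

lemma grCoef_eq (r : ℕ) (hr : 1 ≤ r) (k : ℕ) :
    grCoef r k = dd k * (Real.Gamma ((k:ℝ)+1/2) * Real.Gamma ((r:ℝ)/2+1) /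
      (Real.Gamma (1/2) * Real.Gamma ((k:ℝ) + (r:ℝ)/2 + 1))) := by
  have hrpos : (0:ℝ) < r := by exact_mod_cast hr
  induction k with
  | zero =>
    have h2 : Real.Gamma ((r:ℝ)/2+1) ≠ 0 := (Real.Gamma_pos_of_pos (by linarith)).ne'
    have h3 : Real.Gamma (1/2 : ℝ) ≠ 0 := (Real.Gamma_pos_of_pos (by norm_num)).ne'
    simp only [grCoef, dd, Finset.range_zero, Finset.prod_empty, Nat.cast_zero]
    rw [zero_add, zero_add]
    field_simp
  | succ k ih =>
    have hGhalf : Real.Gamma (((k:ℝ)+1)+1/2) = ((k:ℝ)+1/2) * Real.Gamma ((k:ℝ)+1/2) := by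
      rw [show ((k:ℝ)+1)+1/2 = ((k:ℝ)+1/2)+1 by ring, Real.Gamma_add_one (by positivity)]
    have hGr : Real.Gamma (((k:ℝ)+1) + (r:ℝ)/2 + 1)
        = ((k:ℝ) + (r:ℝ)/2 + 1) * Real.Gamma ((k:ℝ) + (r:ℝ)/2 + 1) := by
      rw [show ((k:ℝ)+1) + (r:ℝ)/2 + 1 = ((k:ℝ) + (r:ℝ)/2 + 1)+1 by ring,
        Real.Gamma_add_one (by positivity)]
    have hP1 : (0:ℝ) < ∏ i ∈ Finset.range k, (2*(i:ℝ)+1) := Finset.prod_pos fun i _ => by positivity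
    have hP2 : (0:ℝ) < ∏ i ∈ Finset.range k, (2*(i:ℝ)+2) := Finset.prod_pos fun i _ => by positivity
    have hP3 : (0:ℝ) < ∏ i ∈ Finset.range k, ((r:ℝ)+2*(i:ℝ)+2) :=
      Finset.prod_pos fun i _ => by positivity
    have hg1 : (0:ℝ) < Real.Gamma ((k:ℝ)+1/2) := Real.Gamma_pos_of_pos (by positivity)
    have hg2 : (0:ℝ) < Real.Gamma ((r:ℝ)/2+1) := Real.Gamma_pos_of_pos (by positivity)
    have hg3 : (0:ℝ) < Real.Gamma (1/2:ℝ) := Real.Gamma_pos_of_pos (by norm_num)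
    have hg4 : (0:ℝ) < Real.Gamma ((k:ℝ) + (r:ℝ)/2 + 1) := Real.Gamma_pos_of_pos (by positivity)
    have hdd : dd (k+1) = dd k * ((2*(k:ℝ)+1)/(2*(k:ℝ)+2)) := by
      unfold dd; rw [Finset.prod_range_succ]
    have hgr : grCoef r (k+1)
        = grCoef r k * ((2*(k:ℝ)+1)^2 / ((2*(k:ℝ)+2) * ((r:ℝ)+2*(k:ℝ)+2))) := by
      unfold grCoef
      rw [Finset.prod_range_succ, Finset.prod_range_succ, Finset.prod_range_succ]
      field_simp
    rw [hgr, ih, hdd]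
    push_cast
    rw [hGhalf, hGr]
    have hddpos : 0 < dd k := Finset.prod_pos fun i _ => by positivity
    field_simp
    ring


/-! ### Summing the series via the Beta integral -/

lemma tsum_grCoef (r : ℕ) (hr : 1 ≤ r) :
    ∑' k, grCoef r k = Real.Gamma ((r:ℝ)/2+1) * Real.Gamma ((r:ℝ)/2) /
      Real.Gamma (((r:ℝ)+1)/2) ^ 2 := by
  have hp : (1:ℝ) ≤ (r:ℝ) := by exact_mod_cast hr
  set p : ℝ := (r:ℝ) with hpdef
  set F : ℕ → ℝ → ℝ := fun k x => dd k * (x ^ ((k:ℝ)-1/2) * (1-x) ^ ((p-1)/2)) with hF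
  set μ := MeasureTheory.volume.restrict (Set.Ioc (0:ℝ) 1) with hμ
  -- measurability
  have hq : (0:ℝ) ≤ (p-1)/2 := by linarith
  have hmeas : ∀ k, MeasureTheory.AEStronglyMeasurable (F k) μ := by
    intro k
    have hcont : ContinuousOn (F k) (Set.Ioc (0:ℝ) 1) := by
      apply continuousOn_of_forall_continuousAt
      intro x hx
      have h1 : ContinuousAt (fun x : ℝ => x ^ ((k:ℝ)-1/2)) x :=
        Real.continuousAt_rpow_const x _ (Or.inl hx.1.ne')
      have h2 : ContinuousAt (fun x : ℝ => (1-x) ^ ((p-1)/2)) x :=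
        (Real.continuousAt_rpow_const (1-x) _ (Or.inr hq)).comp
          ((continuous_const.sub continuous_id).continuousAt)
      exact (continuousAt_const.mul (h1.mul h2))
    exact hcont.aestronglyMeasurable measurableSet_Ioc
  -- the value of each integral
  have hint : ∀ k : ℕ, (∫ x in Set.Ioc (0:ℝ) 1, F k x)
      = dd k * (Real.Gamma ((k:ℝ)+1/2) * Real.Gamma ((p+1)/2) /
          Real.Gamma ((k:ℝ) + p/2 + 1)) := by
    intro k
    rw [← intervalIntegral.integral_of_le zero_le_one]
    have hbeta := realBeta (u := (k:ℝ)+1/2) (v := (p+1)/2)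
      (by positivity) (by linarith)
    have e1 : ((k:ℝ)+1/2) - 1 = (k:ℝ) - 1/2 := by ring
    have e2 : ((p+1)/2) - 1 = (p-1)/2 := by ring
    have e3 : ((k:ℝ)+1/2) + (p+1)/2 = (k:ℝ) + p/2 + 1 := by ring
    rw [e1, e2, e3] at hbeta
    rw [show (fun x => F k x) = fun x => dd k * (x ^ ((k:ℝ)-1/2) * (1-x) ^ ((p-1)/2)) from rfl]
    rw [intervalIntegral.integral_const_mul, hbeta]
  -- the uniform bound for the interchange
  have hbound : ∀ k : ℕ, (∫⁻ x, ‖F k x‖₊ ∂μ)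
      ≤ ENNReal.ofReal (dd k * (1/((k:ℝ)+1/2))) := by
    intro k
    have hek : (-1:ℝ) < (k:ℝ) - 1/2 := by
      have : (0:ℝ) ≤ (k:ℝ) := Nat.cast_nonneg k
      linarith
    have hInt : MeasureTheory.Integrable (fun x => dd k * x ^ ((k:ℝ)-1/2)) μ := by
      have h1 : IntervalIntegrable (fun x : ℝ => x ^ ((k:ℝ)-1/2))
          MeasureTheory.volume 0 1 := intervalIntegral.intervalIntegrable_rpow' hek
      have h2 := (intervalIntegrable_iff_integrableOn_Ioc_of_le zero_le_one).1 h1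
      exact h2.const_mul _
    have hpt : ∀ᵐ x ∂μ, (‖F k x‖₊ : ENNReal)
        ≤ ENNReal.ofReal (dd k * x ^ ((k:ℝ)-1/2)) := by
      filter_upwards [MeasureTheory.ae_restrict_mem measurableSet_Ioc] with x hx
      obtain ⟨hx0, hx1⟩ := hx
      have ha : (0:ℝ) ≤ x ^ ((k:ℝ)-1/2) := Real.rpow_nonneg hx0.le _
      have hb : (0:ℝ) ≤ (1-x) ^ ((p-1)/2) := Real.rpow_nonneg (by linarith) _
      have hFnn : 0 ≤ F k x := by
        have := (dd_pos k).le
        simp only [hF]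
        positivity
      rw [← enorm_eq_nnnorm, Real.enorm_eq_ofReal hFnn]
      apply ENNReal.ofReal_le_ofReal
      have hle1 : (1-x) ^ ((p-1)/2) ≤ 1 :=
        Real.rpow_le_one (by linarith) (by linarith) (by linarith)
      calc F k x = dd k * (x ^ ((k:ℝ)-1/2) * (1-x) ^ ((p-1)/2)) := rfl
        _ ≤ dd k * (x ^ ((k:ℝ)-1/2) * 1) := by
            apply mul_le_mul_of_nonneg_left _ (dd_pos k).le
            exact mul_le_mul_of_nonneg_left hle1 ha
        _ = dd k * x ^ ((k:ℝ)-1/2) := by ring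
    have hposae : 0 ≤ᵐ[μ] fun x => dd k * x ^ ((k:ℝ)-1/2) := by
      filter_upwards [MeasureTheory.ae_restrict_mem measurableSet_Ioc] with x hx
      exact mul_nonneg (dd_pos k).le (Real.rpow_nonneg hx.1.le _)
    calc (∫⁻ x, ‖F k x‖₊ ∂μ) ≤ ∫⁻ x, ENNReal.ofReal (dd k * x ^ ((k:ℝ)-1/2)) ∂μ :=
          MeasureTheory.lintegral_mono_ae hpt
      _ = ENNReal.ofReal (∫ x, dd k * x ^ ((k:ℝ)-1/2) ∂μ) :=
          (MeasureTheory.ofReal_integral_eq_lintegral_ofReal hInt hposae).symm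
      _ = ENNReal.ofReal (dd k * (1/((k:ℝ)+1/2))) := by
          congr 1
          have hknn : (0:ℝ) ≤ (k:ℝ) := Nat.cast_nonneg k
          rw [MeasureTheory.integral_const_mul, hμ,
            ← intervalIntegral.integral_of_le zero_le_one,
            integral_rpow (Or.inl hek), Real.one_rpow,
            Real.zero_rpow (by linarith : ((k:ℝ)-1/2+1) ≠ 0), sub_zero,
            show (k:ℝ)-1/2+1 = (k:ℝ)+1/2 by ring]
  -- summability of the bounds
  have hbsum : Summable (fun k : ℕ => dd k * (1/((k:ℝ)+1/2))) := by
    have hs32 : Summable (fun n : ℕ => 2 * ((n:ℝ)+1) ^ (-(3/2) : ℝ)) := by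
      apply Summable.mul_left
      have h := (Real.summable_nat_rpow (p := -(3/2))).2 (by norm_num)
      have h2 := (summable_nat_add_iff 1).2 h
      simpa using h2
    refine Summable.of_nonneg_of_le
      (fun k => mul_nonneg (dd_pos k).le (by positivity)) (fun k => ?_) hs32
    have hk1 : (0:ℝ) < (k:ℝ)+1 := by positivity
    have h1 : dd k ^ 2 ≤ ((k:ℝ)+1)⁻¹ := by
      rw [← one_div, le_div_iff₀ hk1]
      nlinarith [dd_sq_le k, sq_nonneg (dd k)]
    have hdd : dd k ≤ ((k:ℝ)+1) ^ (-(1/2) : ℝ) := by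
      have hsq : dd k ≤ Real.sqrt (((k:ℝ)+1)⁻¹) :=
        (Real.le_sqrt (dd_pos k).le (by positivity)).2 h1
      rwa [Real.sqrt_inv, Real.sqrt_eq_rpow, ← Real.rpow_neg hk1.le] at hsq
    have h2nd : 1/((k:ℝ)+1/2) ≤ 2 * ((k:ℝ)+1)⁻¹ := by
      rw [← one_div ((k:ℝ)+1), ← mul_div_assoc, mul_one,
        div_le_div_iff₀ (by positivity) hk1]
      linarith
    calc dd k * (1/((k:ℝ)+1/2))
        ≤ (((k:ℝ)+1) ^ (-(1/2):ℝ)) * (2 * ((k:ℝ)+1)⁻¹) :=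
          mul_le_mul hdd h2nd (by positivity) (Real.rpow_nonneg hk1.le _)
      _ = 2 * ((k:ℝ)+1) ^ (-(3/2) : ℝ) := by
          rw [show (-(3/2):ℝ) = -(1/2) + (-1) by norm_num, Real.rpow_add hk1,
            Real.rpow_neg_one]
          ring
  have hf' : (∑' k, ∫⁻ x, ‖F k x‖₊ ∂μ) ≠ ⊤ := by
    apply ne_top_of_le_ne_top _ (ENNReal.tsum_le_tsum hbound)
    rw [← ENNReal.ofReal_tsum_of_nonneg
      (fun k => mul_nonneg (dd_pos k).le (by positivity)) hbsum]
    exact ENNReal.ofReal_ne_top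
  have key := MeasureTheory.integral_tsum hmeas hf'
  -- identify the integral of the sum
  have hne1 : ∀ᵐ x : ℝ ∂μ, x ≠ 1 := by
    apply MeasureTheory.ae_restrict_of_ae
    rw [MeasureTheory.ae_iff]
    have : {x : ℝ | ¬ x ≠ 1} = {(1:ℝ)} := by ext y; simp
    rw [this]
    exact MeasureTheory.measure_singleton 1
  have hpts : (fun x => ∑' k, F k x) =ᵐ[μ]
      (fun x => x ^ (-(1/2):ℝ) * (1-x) ^ (p/2-1)) := by
    filter_upwards [MeasureTheory.ae_restrict_mem measurableSet_Ioc, hne1] with x hx hxne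
    obtain ⟨hx0, hx1⟩ := hx
    have hxlt : x < 1 := lt_of_le_of_ne hx1 hxne
    have h1x : (0:ℝ) < 1 - x := by linarith
    have hxk : ∀ k : ℕ, F k x
        = (dd k * x^k) * (x ^ (-(1/2):ℝ) * (1-x) ^ ((p-1)/2)) := by
      intro k
      have : x ^ ((k:ℝ)-1/2) = x ^ (k:ℕ) * x ^ (-(1/2):ℝ) := by
        rw [show ((k:ℝ)-1/2) = (k:ℝ) + (-(1/2)) by ring, Real.rpow_add hx0,
          Real.rpow_natCast]
      simp only [hF, this]
      ring
    rw [tsum_congr hxk, tsum_mul_right, dd_tsum hx0.le hxlt]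
    have hcomb : (1-x) ^ (-(1/2):ℝ) * (1-x) ^ ((p-1)/2) = (1-x) ^ (p/2-1) := by
      rw [← Real.rpow_add h1x]
      ring_nf
    calc (1-x) ^ (-(1/2):ℝ) * (x ^ (-(1/2):ℝ) * (1-x) ^ ((p-1)/2))
        = x ^ (-(1/2):ℝ) * ((1-x) ^ (-(1/2):ℝ) * (1-x) ^ ((p-1)/2)) := by ring
      _ = x ^ (-(1/2):ℝ) * (1-x) ^ (p/2-1) := by rw [hcomb]
  have hleft : (∫ x, (∑' k, F k x) ∂μ)
      = Real.Gamma (1/2) * Real.Gamma (p/2) / Real.Gamma ((p+1)/2) := by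
    rw [MeasureTheory.integral_congr_ae hpts, hμ,
      ← intervalIntegral.integral_of_le zero_le_one]
    have hbeta := realBeta (u := (1/2:ℝ)) (v := p/2) (by norm_num) (by linarith)
    have e1 : (1/2:ℝ) - 1 = -(1/2) := by norm_num
    have e2 : (p/2) - 1 = p/2 - 1 := rfl
    have e3 : (1/2:ℝ) + p/2 = (p+1)/2 := by ring
    rw [e1, e3] at hbeta
    exact hbeta
  -- put everything together
  have hΓhalf : (0:ℝ) < Real.Gamma (1/2) := Real.Gamma_pos_of_pos (by norm_num)
  have hΓp2 : (0:ℝ) < Real.Gamma (p/2) := Real.Gamma_pos_of_pos (by linarith)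
  have hΓp12 : (0:ℝ) < Real.Gamma ((p+1)/2) := Real.Gamma_pos_of_pos (by linarith)
  have hΓp21 : (0:ℝ) < Real.Gamma (p/2+1) := Real.Gamma_pos_of_pos (by linarith)
  have hgr : ∀ k : ℕ, grCoef r k
      = (Real.Gamma (p/2+1) / (Real.Gamma (1/2) * Real.Gamma ((p+1)/2)))
        * (∫ x, F k x ∂μ) := by
    intro k
    rw [hμ]
    rw [hint k, grCoef_eq r hr k]
    have hΓk : (0:ℝ) < Real.Gamma ((k:ℝ)+1/2) := Real.Gamma_pos_of_pos (by positivity)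
    have hΓkp : (0:ℝ) < Real.Gamma ((k:ℝ)+p/2+1) := Real.Gamma_pos_of_pos (by positivity)
    field_simp
    ring
  rw [tsum_congr hgr, tsum_mul_left, ← key, hleft]
  field_simp

/-- For every positive integer `r`, `E_r(1) = 1`. -/
theorem Er_one (r : ℕ) (hr : 1 ≤ r) : Er r 1 = 1 := by
  have hp : (1:ℝ) ≤ (r:ℝ) := by exact_mod_cast hr
  have hA : (0:ℝ) < Real.Gamma (((r:ℝ)+1)/2) := Real.Gamma_pos_of_pos (by linarith)
  have hB : (0:ℝ) < Real.Gamma ((r:ℝ)/2) := Real.Gamma_pos_of_pos (by linarith)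
  have hΓ1 : Real.Gamma ((r:ℝ)/2+1) = ((r:ℝ)/2) * Real.Gamma ((r:ℝ)/2) :=
    Real.Gamma_add_one (by positivity : ((r:ℝ)/2) ≠ 0)
  unfold Er
  simp only [one_pow, mul_one]
  rw [tsum_grCoef r hr, hΓ1]
  have hr0 : ((r:ℝ)) ≠ 0 := by positivity
  field_simp
end

section
/- For every integer r ≥ 2 and z in [−1,1], E_r(z) = (2(r−1)Γ((r+1)/2)/(Γ(1/2)Γ(r/2))) ∫_0^{π/2} cos^{r−2}θ · sinθ · arcsin(z sinθ) dθ. -/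
open Real Finset intervalIntegral

/- ### Auxiliary definitions and lemmas -/

section Aux

open MeasureTheory Filter Topology

/-- The Wallis-type coefficient `(2k-1)!! / (2k)!!`. -/
noncomputable def cc (k : ℕ) : ℝ :=
  (∏ i ∈ Finset.range k, (2 * (i : ℝ) + 1)) / (∏ i ∈ Finset.range k, (2 * (i : ℝ) + 2))

lemma prodOdd_pos (k : ℕ) : 0 < ∏ i ∈ Finset.range k, (2 * (i : ℝ) + 1) :=
  Finset.prod_pos fun i _ => by positivity

lemma prodEven_pos (k : ℕ) : 0 < ∏ i ∈ Finset.range k, (2 * (i : ℝ) + 2) :=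
  Finset.prod_pos fun i _ => by positivity

lemma prodR_pos (r k : ℕ) : 0 < ∏ i ∈ Finset.range k, ((r : ℝ) + 2 * (i : ℝ) + 2) :=
  Finset.prod_pos fun i _ => by positivity

lemma cc_pos (k : ℕ) : 0 < cc k := div_pos (prodOdd_pos k) (prodEven_pos k)

lemma cc_succ (k : ℕ) : cc (k + 1) = cc k * ((2 * k + 1) / (2 * k + 2)) := by
  unfold cc
  rw [Finset.prod_range_succ, Finset.prod_range_succ, div_mul_div_comm]

lemma cc_zero : cc 0 = 1 := by simp [cc]

lemma cc_le_one (k : ℕ) : cc k ≤ 1 := by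
  induction k with
  | zero => simp [cc_zero]
  | succ k ih =>
    rw [cc_succ]
    have h1 : (2 * (k:ℝ) + 1) / (2 * k + 2) ≤ 1 := by
      rw [div_le_one (by positivity)]; linarith
    calc cc k * ((2 * k + 1) / (2 * k + 2)) ≤ 1 * 1 :=
      mul_le_mul ih h1 (by positivity) zero_le_one
    _ = 1 := by ring

lemma cc_sq_bound (k : ℕ) : cc k ^ 2 * (2 * k + 1) ≤ 1 := by
  induction k with
  | zero => simp [cc_zero]
  | succ k ih =>
    rw [cc_succ]
    have hc := cc_pos k
    have h2 : (0:ℝ) < 2 * (k:ℝ) + 2 := by positivity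
    have h3 : (cc k * ((2*(k:ℝ)+1)/(2*(k:ℝ)+2)))^2 * (2*((k:ℝ)+1)+1)
        = (cc k^2*(2*(k:ℝ)+1)) * ((2*(k:ℝ)+1)*(2*(k:ℝ)+3)/(2*(k:ℝ)+2)^2) := by
      field_simp; ring
    push_cast
    rw [h3]
    have h4 : (2*(k:ℝ)+1)*(2*(k:ℝ)+3)/(2*(k:ℝ)+2)^2 ≤ 1 := by
      rw [div_le_one (by positivity)]; nlinarith
    have h5 : (0:ℝ) ≤ (2*(k:ℝ)+1)*(2*(k:ℝ)+3)/(2*(k:ℝ)+2)^2 := by positivity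
    nlinarith

lemma sinpow_step (n : ℕ) :
    (∫ x in (0:ℝ)..(π/2), sin x ^ (n + 2))
      = (n + 1) / (n + 2) * ∫ x in (0:ℝ)..(π/2), sin x ^ n := by
  rw [integral_sin_pow]
  simp [Real.cos_pi_div_two, Real.sin_zero]

lemma sinpow_even (k : ℕ) :
    (∫ x in (0:ℝ)..(π/2), sin x ^ (2 * k)) = π / 2 * cc k := by
  induction k with
  | zero => simp [cc_zero]
  | succ k ih =>
    have h : 2 * (k + 1) = 2 * k + 2 := by ring
    rw [h, sinpow_step, ih, cc_succ]
    have h1 := prodEven_pos k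
    push_cast
    field_simp

lemma ell_cont (m : ℝ) (hm1 : m < 1) (hm0 : 0 ≤ m) :
    Continuous (fun θ : ℝ => (1 - m * sin θ ^ 2)⁻¹) := by
  apply Continuous.inv₀ (by fun_prop)
  intro θ
  nlinarith [sin_sq_le_one θ, sq_nonneg (sin θ)]

lemma ell_integral (m : ℝ) (hm0 : 0 ≤ m) (hm1 : m < 1) :
    (∫ θ in (0:ℝ)..(π/2), (1 - m * sin θ ^ 2)⁻¹) = π / (2 * Real.sqrt (1 - m)) := by
  set s := Real.sqrt (1 - m) with hs
  have hspos : 0 < s := Real.sqrt_pos.mpr (by linarith)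
  have hs2 : s ^ 2 = 1 - m := Real.sq_sqrt (by linarith)
  set F := fun b : ℝ => s⁻¹ * Real.arctan (s * Real.tan b) with hF
  have key : ∀ b ∈ Set.Ico (0:ℝ) (π/2),
      (∫ θ in (0:ℝ)..b, (1 - m * sin θ ^ 2)⁻¹) = F b := by
    intro b hb
    have hder : ∀ x ∈ Set.uIcc (0:ℝ) b,
        HasDerivAt F ((1 - m * sin x ^ 2)⁻¹) x := by
      intro x hx
      rw [Set.uIcc_of_le hb.1] at hx
      have hcos : 0 < Real.cos x := by
        apply Real.cos_pos_of_mem_Ioo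
        constructor
        · linarith [hx.1, Real.pi_pos]
        · exact lt_of_le_of_lt hx.2 hb.2
      have h1 : HasDerivAt Real.tan (1 / Real.cos x ^ 2) x :=
        Real.hasDerivAt_tan hcos.ne'
      have h2 : HasDerivAt (fun y => s * Real.tan y) (s * (1 / Real.cos x ^ 2)) x :=
        h1.const_mul s
      have h3 : HasDerivAt (fun y => Real.arctan (s * Real.tan y))
          ((1 + (s * Real.tan x) ^ 2)⁻¹ * (s * (1 / Real.cos x ^ 2))) x := by
        have h3' := (Real.hasDerivAt_arctan (s * Real.tan x)).comp x h2
        rw [one_div (1 + _)] at h3'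
        exact h3'
      have h4 := h3.const_mul s⁻¹
      refine h4.congr_deriv ?_
      symm
      have hc2 : Real.cos x ^ 2 ≠ 0 := by positivity
      rw [Real.tan_eq_sin_div_cos]
      have hsc : Real.sin x ^ 2 + Real.cos x ^ 2 = 1 := Real.sin_sq_add_cos_sq x
      have hne : 1 - m * Real.sin x ^ 2 ≠ 0 := by
        nlinarith [Real.sin_sq_le_one x, sq_nonneg (Real.sin x)]
      have hss : (s * Real.sin x) ^ 2 = (1 - m) * Real.sin x ^ 2 := by rw [mul_pow, hs2]
      field_simp
      linear_combination (Real.cos x ^ 2) * hss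
        + (Real.cos x ^2 * (1 - m * Real.sin x ^2)) * hsc
        + (m * Real.cos x^2 * Real.sin x^2) * hsc
        + (Real.sin x^2 * (1 - Real.cos x^2)) * hs2 + (1 - Real.cos x^2) * hsc
    rw [integral_eq_sub_of_hasDerivAt hder
      (((ell_cont m hm1 hm0)).intervalIntegrable 0 b)]
    simp [hF]
  have hcont : ContinuousAt (fun b => ∫ θ in (0:ℝ)..b, (1 - m * sin θ ^ 2)⁻¹) (π/2) := by
    have : Continuous (fun b => ∫ θ in (0:ℝ)..b, (1 - m * sin θ ^ 2)⁻¹) :=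
      intervalIntegral.continuous_primitive
        (fun a b => ((ell_cont m hm1 hm0).intervalIntegrable a b :
          IntervalIntegrable _ MeasureTheory.volume a b)) (0 : ℝ)
    exact this.continuousAt
  have hlim1 : Tendsto (fun b => ∫ θ in (0:ℝ)..b, (1 - m * sin θ ^ 2)⁻¹)
      (𝓝[<] (π/2)) (𝓝 (∫ θ in (0:ℝ)..(π/2), (1 - m * sin θ ^ 2)⁻¹)) :=
    (hcont.tendsto).mono_left nhdsWithin_le_nhds
  have hlim2 : Tendsto F (𝓝[<] (π/2)) (𝓝 (s⁻¹ * (π/2))) := by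
    apply Tendsto.const_mul
    have h5 : Tendsto (fun b => s * Real.tan b) (𝓝[<] (π/2)) atTop :=
      (Real.tendsto_tan_pi_div_two).const_mul_atTop hspos
    exact (Real.tendsto_arctan_atTop.mono_right nhdsWithin_le_nhds).comp h5
  have heq : (fun b => ∫ θ in (0:ℝ)..b, (1 - m * sin θ ^ 2)⁻¹) =ᶠ[𝓝[<] (π/2)] F := by
    filter_upwards [Ico_mem_nhdsLT (by positivity : (0:ℝ) < π/2)] with b hb
    exact key b hb
  have := tendsto_nhds_unique (hlim1.congr' heq) hlim2
  rw [this]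
  rw [eq_div_iff (by positivity)]
  field_simp

lemma swap_tsum_integral (a b : ℝ) (hab : a ≤ b) (f : ℕ → ℝ → ℝ)
    (hcont : ∀ k, Continuous (f k)) (u : ℕ → ℝ) (hu0 : ∀ k, 0 ≤ u k)
    (hu : ∀ k θ, θ ∈ Set.Ioc a b → |f k θ| ≤ u k) (hsum : Summable u) :
    (∫ θ in a..b, (∑' k, f k θ)) = ∑' k, ∫ θ in a..b, f k θ := by
  have h1 : ∀ k, (∫ θ in a..b, f k θ) = ∫ θ in Set.Ioc a b, f k θ := fun k =>
    intervalIntegral.integral_of_le hab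
  rw [intervalIntegral.integral_of_le hab]
  simp only [h1]
  apply MeasureTheory.integral_tsum
  · exact fun k => ((hcont k).aestronglyMeasurable).restrict
  · apply ne_top_of_le_ne_top (b := ENNReal.ofReal (∑' k, u k) * ENNReal.ofReal (b - a))
      (ENNReal.mul_ne_top ENNReal.ofReal_ne_top ENNReal.ofReal_ne_top)
    have hb : ∀ k, (∫⁻ θ in Set.Ioc a b, ‖f k θ‖₊)
        ≤ ENNReal.ofReal (u k) * ENNReal.ofReal (b - a) := by
      intro k
      calc (∫⁻ θ in Set.Ioc a b, ‖f k θ‖₊)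
          = ∫⁻ θ in Set.Ioc a b, ENNReal.ofReal |f k θ| := by
            apply MeasureTheory.lintegral_congr
            intro θ
            exact Real.enorm_eq_ofReal_abs _
        _ ≤ ∫⁻ _ in Set.Ioc a b, ENNReal.ofReal (u k) :=
            MeasureTheory.setLIntegral_mono measurable_const
              (fun θ hθ => ENNReal.ofReal_le_ofReal (hu k θ hθ))
        _ = ENNReal.ofReal (u k) * volume (Set.Ioc a b) := by
            rw [MeasureTheory.setLIntegral_const]
        _ = ENNReal.ofReal (u k) * ENNReal.ofReal (b - a) := by
            rw [Real.volume_Ioc]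
    calc (∑' k, ∫⁻ θ in Set.Ioc a b, ‖f k θ‖₊)
        ≤ ∑' k, ENNReal.ofReal (u k) * ENNReal.ofReal (b - a) := ENNReal.tsum_le_tsum hb
      _ = (∑' k, ENNReal.ofReal (u k)) * ENNReal.ofReal (b - a) := ENNReal.tsum_mul_right
      _ = ENNReal.ofReal (∑' k, u k) * ENNReal.ofReal (b - a) := by
          rw [ENNReal.ofReal_tsum_of_nonneg hu0 hsum]

lemma hasSum_inv_sqrt (m : ℝ) (hm0 : 0 ≤ m) (hm1 : m < 1) :
    HasSum (fun k => cc k * m ^ k) ((Real.sqrt (1 - m))⁻¹) := by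
  have hsummable : Summable (fun k => cc k * m ^ k) := by
    apply Summable.of_nonneg_of_le (fun k => mul_nonneg (cc_pos k).le (by positivity))
      (fun k => ?_) (summable_geometric_of_lt_one hm0 hm1)
    calc cc k * m ^ k ≤ 1 * m ^ k := by
          apply mul_le_mul_of_nonneg_right (cc_le_one k) (by positivity)
      _ = m ^ k := one_mul _
  rw [Summable.hasSum_iff hsummable]
  have hgeo : ∀ θ : ℝ, (∑' k : ℕ, (m * sin θ ^ 2) ^ k) = (1 - m * sin θ ^ 2)⁻¹ := by
    intro θ
    apply tsum_geometric_of_lt_one (by positivity)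
    nlinarith [sin_sq_le_one θ]
  have hswap := swap_tsum_integral 0 (π/2) (by positivity)
    (fun k θ => (m * sin θ ^ 2) ^ k) (fun k => by fun_prop)
    (fun k => m ^ k) (fun k => by positivity)
    (fun k θ _ => by
      rw [abs_of_nonneg (by positivity)]
      apply pow_le_pow_left₀ (by positivity)
      nlinarith [sin_sq_le_one θ, sq_nonneg (sin θ)])
    (summable_geometric_of_lt_one hm0 hm1)
  have hint : ∀ k : ℕ, (∫ θ in (0:ℝ)..(π/2), (m * sin θ ^ 2) ^ k)
      = π / 2 * (cc k * m ^ k) := by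
    intro k
    have h : ∀ θ : ℝ, (m * sin θ ^ 2) ^ k = m ^ k * sin θ ^ (2 * k) := by
      intro θ; rw [mul_pow, ← pow_mul]
    simp_rw [h]
    rw [intervalIntegral.integral_const_mul, sinpow_even]
    ring
  simp_rw [hgeo] at hswap
  rw [ell_integral m hm0 hm1] at hswap
  simp_rw [hint] at hswap
  rw [tsum_mul_left] at hswap
  have hpi : (0:ℝ) < π := pi_pos
  have hsq : (0:ℝ) < Real.sqrt (1 - m) := Real.sqrt_pos.mpr (by linarith)
  rw [div_eq_iff (by positivity : (0:ℝ) < 2 * Real.sqrt (1 - m)).ne'] at hswap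
  rw [inv_eq_one_div, eq_div_iff hsq.ne']
  apply mul_left_cancel₀ hpi.ne'
  rw [mul_one]
  linear_combination -hswap

lemma hasSum_arcsin (x : ℝ) (hx0 : 0 ≤ x) (hx1 : x < 1) :
    HasSum (fun k => cc k / (2 * k + 1) * x ^ (2 * k + 1)) (Real.arcsin x) := by
  have hsummable : Summable (fun k : ℕ => cc k / (2 * (k:ℝ) + 1) * x ^ (2 * k + 1)) := by
    apply Summable.of_nonneg_of_le
      (fun k => mul_nonneg (div_nonneg (cc_pos k).le (by positivity)) (by positivity))
      (fun k => ?_)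
      (summable_geometric_of_lt_one (by positivity) (by nlinarith) :
        Summable fun k : ℕ => (x^2)^k)
    have h1 : cc k / (2 * (k:ℝ) + 1) ≤ 1 := by
      rw [div_le_one (by positivity)]
      calc cc k ≤ 1 := cc_le_one k
        _ ≤ 2 * (k:ℝ) + 1 := by
            have : (0:ℝ) ≤ (k:ℝ) := Nat.cast_nonneg k
            linarith
    have h2 : x ^ (2 * k + 1) ≤ (x ^ 2) ^ k := by
      rw [← pow_mul]
      calc x ^ (2 * k + 1) ≤ x ^ (2 * k) := by
            apply pow_le_pow_of_le_one hx0 hx1.le; omega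
        _ = x ^ (2 * k) := rfl
    calc cc k / (2 * (k:ℝ) + 1) * x ^ (2 * k + 1) ≤ 1 * (x^2)^k := by
          apply mul_le_mul h1 h2 (by positivity) zero_le_one
      _ = (x^2)^k := one_mul _
  rw [Summable.hasSum_iff hsummable]
  have harcsin : Real.arcsin x = ∫ t in (0:ℝ)..x, (Real.sqrt (1 - t^2))⁻¹ := by
    have hder : ∀ t ∈ Set.uIcc (0:ℝ) x,
        HasDerivAt Real.arcsin ((Real.sqrt (1 - t^2))⁻¹) t := by
      intro t ht
      rw [Set.uIcc_of_le hx0] at ht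
      have h1 : t ≠ -1 := by intro h; rw [h] at ht; linarith [ht.1]
      have h2 : t ≠ 1 := by intro h; rw [h] at ht; linarith [ht.2]
      simpa [one_div] using Real.hasDerivAt_arcsin h1 h2
    have hcont : ContinuousOn (fun t : ℝ => (Real.sqrt (1 - t^2))⁻¹) (Set.uIcc 0 x) := by
      apply ContinuousOn.inv₀ (by fun_prop)
      intro t ht
      rw [Set.uIcc_of_le hx0] at ht
      have : 0 < 1 - t^2 := by nlinarith [ht.1, ht.2]
      positivity
    rw [integral_eq_sub_of_hasDerivAt hder (hcont.intervalIntegrable), Real.arcsin_zero,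
      sub_zero]
  rw [harcsin]
  have hcongr : ∀ t ∈ Set.uIcc (0:ℝ) x,
      (Real.sqrt (1 - t^2))⁻¹ = ∑' k : ℕ, cc k * t ^ (2 * k) := by
    intro t ht
    rw [Set.uIcc_of_le hx0] at ht
    have h := (hasSum_inv_sqrt (t^2) (by positivity) (by nlinarith [ht.1, ht.2])).tsum_eq
    rw [← h]
    apply tsum_congr
    intro k
    rw [← pow_mul]
  rw [intervalIntegral.integral_congr (g := fun t => ∑' k : ℕ, cc k * t ^ (2*k))
    (fun t ht => hcongr t ht)]
  have hswap := swap_tsum_integral 0 x hx0 (fun k t => cc k * t ^ (2*k))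
    (fun k => by fun_prop) (fun k => (x^2)^k) (fun k => pow_nonneg (sq_nonneg x) k)
    (fun k t ht => by
      rw [abs_of_nonneg (mul_nonneg (cc_pos k).le (pow_nonneg ht.1.le _))]
      calc cc k * t ^ (2*k) ≤ 1 * x ^ (2*k) := by
            apply mul_le_mul (cc_le_one k) ?_ (pow_nonneg ht.1.le _) zero_le_one
            exact pow_le_pow_left₀ ht.1.le ht.2 _
        _ = (x^2)^k := by rw [one_mul, pow_mul])
    (summable_geometric_of_lt_one (by positivity) (by nlinarith))
  rw [hswap]
  apply tsum_congr
  intro k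
  rw [intervalIntegral.integral_const_mul, integral_pow]
  push_cast
  ring

lemma cospow_gamma (n : ℕ) : (∫ x in (0:ℝ)..(π/2), cos x ^ n)
    = Real.sqrt π * Real.Gamma (((n:ℝ)+1)/2) / (2 * Real.Gamma (((n:ℝ)+2)/2)) := by
  induction n using Nat.twoStepInduction with
  | zero =>
    simp only [pow_zero, Nat.cast_zero]
    rw [intervalIntegral.integral_const]
    norm_num [Real.Gamma_one_half_eq, Real.Gamma_one]
    rw [Real.mul_self_sqrt pi_pos.le]
  | one =>
    simp only [pow_one, Nat.cast_one, integral_cos, Real.sin_pi_div_two, Real.sin_zero]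
    rw [show ((1:ℝ)+1)/2 = 1 by norm_num, show ((1:ℝ)+2)/2 = 1/2 + 1 by norm_num,
      Real.Gamma_add_one (by norm_num), Real.Gamma_one_half_eq, Real.Gamma_one]
    have h : Real.sqrt π ≠ 0 := by positivity
    field_simp
    norm_num
  | more n ih _ =>
    rw [integral_cos_pow]
    simp only [Real.cos_pi_div_two, Real.sin_zero, Real.sin_pi_div_two, Real.cos_zero]
    rw [ih]
    have hpos1 : (0:ℝ) < ((n:ℝ)+1)/2 := by positivity
    have hpos2 : (0:ℝ) < ((n:ℝ)+2)/2 := by positivity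
    push_cast
    have e1 : ((n:ℝ)+2+1)/2 = ((n:ℝ)+1)/2 + 1 := by ring
    have e2 : ((n:ℝ)+2+2)/2 = ((n:ℝ)+2)/2 + 1 := by ring
    rw [e1, e2, Real.Gamma_add_one hpos1.ne', Real.Gamma_add_one hpos2.ne']
    have hgpos1 : 0 < Real.Gamma (((n:ℝ)+1)/2) := Real.Gamma_pos_of_pos hpos1
    have hgpos2 : 0 < Real.Gamma (((n:ℝ)+2)/2) := Real.Gamma_pos_of_pos hpos2
    have hn2 : ((n:ℝ)+2) ≠ 0 := by positivity
    rw [zero_pow (Nat.succ_ne_zero n)]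
    field_simp
    ring

lemma cospow_sinpow_rec (p q : ℕ) :
    (∫ x in (0:ℝ)..(π/2), cos x ^ p * sin x ^ (q+2))
      = ((q:ℝ)+1)/((p:ℝ)+(q:ℝ)+2) * ∫ x in (0:ℝ)..(π/2), cos x ^ p * sin x ^ q := by
  have hu : ∀ x ∈ Set.uIcc (0:ℝ) (π/2),
      HasDerivAt (fun y => sin y ^ (q+1)) (((q:ℝ)+1) * cos x * sin x ^ q) x := by
    intro x _
    have := (Real.hasDerivAt_sin x).fun_pow (q+1)
    simpa [mul_comm, mul_assoc, mul_left_comm] using this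
  have hv : ∀ x ∈ Set.uIcc (0:ℝ) (π/2),
      HasDerivAt (fun y => cos y ^ (p+1)) (-(((p:ℝ)+1) * sin x * cos x ^ p)) x := by
    intro x _
    have := (Real.hasDerivAt_cos x).fun_pow (p+1)
    simpa [mul_comm, mul_assoc, mul_left_comm] using this
  have h := intervalIntegral.integral_mul_deriv_eq_deriv_mul hu hv
    (by apply Continuous.intervalIntegrable; fun_prop)
    (by apply Continuous.intervalIntegrable; fun_prop)
  simp only [Real.sin_pi_div_two, Real.cos_pi_div_two, Real.sin_zero, Real.cos_zero] at h
  have e1 : (∫ x in (0:ℝ)..(π/2), sin x ^ (q+1) * -(((p:ℝ)+1) * sin x * cos x ^ p))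
      = -(((p:ℝ)+1)) * ∫ x in (0:ℝ)..(π/2), cos x ^ p * sin x ^ (q+2) := by
    rw [← intervalIntegral.integral_const_mul]
    apply intervalIntegral.integral_congr
    intro x _
    simp only [pow_succ]
    ring
  have e2 : (∫ x in (0:ℝ)..(π/2), ((q:ℝ)+1) * cos x * sin x ^ q * cos x ^ (p+1))
      = (((q:ℝ)+1)) * ∫ x in (0:ℝ)..(π/2), cos x ^ (p+2) * sin x ^ q := by
    rw [← intervalIntegral.integral_const_mul]
    apply intervalIntegral.integral_congr
    intro x _
    simp only [pow_succ]
    ring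
  rw [e1, e2] at h
  have e3 : (∫ x in (0:ℝ)..(π/2), cos x ^ (p+2) * sin x ^ q)
      = (∫ x in (0:ℝ)..(π/2), cos x ^ p * sin x ^ q)
        - ∫ x in (0:ℝ)..(π/2), cos x ^ p * sin x ^ (q+2) := by
    rw [← intervalIntegral.integral_sub
      (by apply Continuous.intervalIntegrable; fun_prop)
      (by apply Continuous.intervalIntegrable; fun_prop)]
    apply intervalIntegral.integral_congr
    intro x _
    show cos x ^ (p+2) * sin x ^ q = cos x ^ p * sin x ^ q - cos x ^ p * sin x ^ (q+2)
    have hcs : cos x ^ 2 = 1 - sin x ^ 2 := Real.cos_sq' x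
    rw [pow_add, hcs]
    ring
  rw [e3] at h
  rw [one_pow, one_pow, zero_pow (Nat.succ_ne_zero p), zero_pow (Nat.succ_ne_zero q)] at h
  have hne : ((p:ℝ)+(q:ℝ)+2) ≠ 0 := by positivity
  field_simp
  linarith [h]

lemma summable_u : Summable (fun k : ℕ => cc k / (2 * (k:ℝ) + 1)) := by
  have hv : ∀ x : ℝ, 0 ≤ x → (Real.sqrt x ^ 3)⁻¹ = x ^ (-(3/2) : ℝ) := by
    intro x hx
    rw [Real.rpow_neg hx, Real.sqrt_eq_rpow, ← Real.rpow_natCast (x ^ ((1:ℝ)/2)) 3,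
      ← Real.rpow_mul hx]
    norm_num
  have hsum : Summable (fun k : ℕ => (Real.sqrt ((k:ℝ)+1) ^ 3)⁻¹) := by
    have h1 : Summable (fun n : ℕ => (n:ℝ) ^ (-(3/2) : ℝ)) :=
      Real.summable_nat_rpow.mpr (by norm_num)
    have h2 := (_root_.summable_nat_add_iff (f := fun n : ℕ => (n:ℝ) ^ (-(3/2) : ℝ)) 1).mpr h1
    apply h2.congr
    intro n
    rw [hv ((n:ℝ)+1) (by positivity)]
    push_cast
    ring_nf
  apply Summable.of_nonneg_of_le
    (fun k => div_nonneg (cc_pos k).le (by positivity)) (fun k => ?_) hsum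
  set s := Real.sqrt (2 * (k:ℝ) + 1) with hsdef
  set t := Real.sqrt ((k:ℝ) + 1) with htdef
  have hs0 : 0 < s := Real.sqrt_pos.mpr (by positivity)
  have ht0 : 0 < t := Real.sqrt_pos.mpr (by positivity)
  have hs2 : s ^ 2 = 2 * (k:ℝ) + 1 := Real.sq_sqrt (by positivity)
  have hts : t ≤ s := Real.sqrt_le_sqrt (by push_cast; linarith [Nat.cast_nonneg (α := ℝ) k])
  have h1 : cc k ≤ s⁻¹ := by
    rw [inv_eq_one_div, le_div_iff₀ hs0]
    nlinarith [cc_sq_bound k, cc_pos k, hs0, hs2, mul_pos (cc_pos k) hs0]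
  calc cc k / (2 * (k:ℝ) + 1) ≤ s⁻¹ / s ^ 2 := by
        rw [← hs2] at *
        exact div_le_div_of_nonneg_right h1 (by positivity) |>.trans_eq rfl
    _ = (s ^ 3)⁻¹ := by
        field_simp
    _ ≤ (t ^ 3)⁻¹ := by
        gcongr

lemma grCoef_zero (r : ℕ) : grCoef r 0 = 1 := by simp [grCoef]

lemma grCoef_succ (r k : ℕ) : grCoef r (k+1)
    = grCoef r k * ((2*(k:ℝ)+1)^2 / ((2*(k:ℝ)+2) * ((r:ℝ)+2*(k:ℝ)+2))) := by
  unfold grCoef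
  rw [Finset.prod_range_succ, Finset.prod_range_succ, Finset.prod_range_succ]
  have h1 := prodEven_pos k
  have h2 := prodR_pos r k
  field_simp

/-- The main identity for nonnegative `z`. -/
lemma Er_integral_repr_nonneg (r : ℕ) (hr : 2 ≤ r) (z : ℝ) (hz0 : 0 ≤ z) (hz1 : z ≤ 1) :
    Er r z
      = (2 * ((r : ℝ) - 1) * Real.Gamma (((r : ℝ) + 1) / 2) /
          (Real.Gamma (1 / 2) * Real.Gamma ((r : ℝ) / 2))) *
        ∫ θ in (0 : ℝ)..(π / 2),
          Real.cos θ ^ (r - 2) * Real.sin θ * Real.arcsin (z * Real.sin θ) := by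
  have hrR : (2:ℝ) ≤ (r:ℝ) := by exact_mod_cast hr
  have hcast : ((r - 2 : ℕ) : ℝ) = (r:ℝ) - 2 := by
    rw [Nat.cast_sub hr]; norm_num
  set J : ℕ → ℝ := fun k => ∫ θ in (0:ℝ)..(π/2), cos θ ^ (r-2) * sin θ ^ (2*k+2) with hJdef
  -- Step 1: rewrite the integrand as a series (a.e.)
  have hIcongr : (∫ θ in (0:ℝ)..(π/2), Real.cos θ ^ (r - 2) * Real.sin θ
        * Real.arcsin (z * Real.sin θ))
      = ∫ θ in (0:ℝ)..(π/2), ∑' k : ℕ,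
          (Real.cos θ ^ (r-2) * Real.sin θ) * (cc k / (2*(k:ℝ)+1) * (z * Real.sin θ)^(2*k+1)) := by
    apply intervalIntegral.integral_congr_ae
    have hne : ∀ᵐ x : ℝ, x ≠ π/2 := by
      simp only [MeasureTheory.ae_iff, not_not, Set.setOf_eq_eq_singleton]
      exact measure_singleton _
    filter_upwards [hne] with θ hθ hmem
    rw [Set.uIoc_of_le (by positivity : (0:ℝ) ≤ π/2)] at hmem
    have hθlt : θ < π/2 := lt_of_le_of_ne hmem.2 hθ
    have h0s : 0 < sin θ := sin_pos_of_pos_of_lt_pi hmem.1 (by linarith [pi_pos])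
    have hs1 : sin θ < 1 := by
      have h := Real.strictMonoOn_sin
        (Set.mem_Icc.mpr ⟨by linarith [pi_pos, hmem.1], by linarith⟩)
        (Set.mem_Icc.mpr ⟨by linarith [pi_pos], le_rfl⟩) hθlt
      rwa [Real.sin_pi_div_two] at h
    have harg0 : 0 ≤ z * sin θ := mul_nonneg hz0 h0s.le
    have harg1 : z * sin θ < 1 := by nlinarith
    rw [← (hasSum_arcsin _ harg0 harg1).tsum_eq, ← tsum_mul_left]
  rw [hIcongr]
  -- Step 2: swap sum and integral
  have hcos0 : ∀ θ ∈ Set.Ioc (0:ℝ) (π/2), 0 ≤ cos θ := fun θ hθ =>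
    Real.cos_nonneg_of_mem_Icc (Set.mem_Icc.mpr ⟨by linarith [hθ.1, pi_pos], hθ.2⟩)
  have hswap := swap_tsum_integral 0 (π/2) (by positivity)
    (fun k θ => (Real.cos θ ^ (r-2) * Real.sin θ)
      * (cc k / (2*(k:ℝ)+1) * (z * Real.sin θ)^(2*k+1)))
    (fun k => by fun_prop)
    (fun k => cc k / (2*(k:ℝ)+1))
    (fun k => div_nonneg (cc_pos k).le (by positivity))
    (fun k θ hθ => by
      have hc0 := hcos0 θ hθ
      have hs0 : 0 < sin θ := sin_pos_of_pos_of_lt_pi hθ.1 (by linarith [hθ.2, pi_pos])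
      have hs1 : sin θ ≤ 1 := sin_le_one θ
      have harg0 : 0 ≤ z * sin θ := mul_nonneg hz0 hs0.le
      have harg1 : z * sin θ ≤ 1 := by nlinarith
      have hccd : 0 ≤ cc k / (2*(k:ℝ)+1) := div_nonneg (cc_pos k).le (by positivity)
      rw [abs_of_nonneg (by positivity)]
      calc (Real.cos θ ^ (r-2) * Real.sin θ)
            * (cc k / (2*(k:ℝ)+1) * (z * Real.sin θ)^(2*k+1))
          ≤ (1 * 1) * (cc k / (2*(k:ℝ)+1) * 1) := by
            apply mul_le_mul
            · exact mul_le_mul (pow_le_one₀ hc0 (cos_le_one θ)) hs1 hs0.le zero_le_one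
            · exact mul_le_mul_of_nonneg_left (pow_le_one₀ harg0 harg1) hccd
            · positivity
            · norm_num
        _ = cc k / (2*(k:ℝ)+1) := by ring)
    summable_u
  rw [hswap]
  -- Step 3: compute each integral
  have hval : ∀ k : ℕ, (∫ θ in (0:ℝ)..(π/2),
        (Real.cos θ ^ (r-2) * Real.sin θ)
          * (cc k / (2*(k:ℝ)+1) * (z * Real.sin θ)^(2*k+1)))
      = (cc k / (2*(k:ℝ)+1) * J k) * z^(2*k+1) := by
    intro k
    have hpt : ∀ θ : ℝ, (Real.cos θ ^ (r-2) * Real.sin θ)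
          * (cc k / (2*(k:ℝ)+1) * (z * Real.sin θ)^(2*k+1))
        = (cc k / (2*(k:ℝ)+1) * z^(2*k+1)) * (cos θ ^ (r-2) * sin θ ^ (2*k+2)) := by
      intro θ
      rw [mul_pow]
      ring
    simp_rw [hpt]
    rw [intervalIntegral.integral_const_mul]
    show cc k / (2*(k:ℝ)+1) * z^(2*k+1) * J k = _
    ring
  simp_rw [hval]
  -- Step 4: the values J k
  have hJrec : ∀ k : ℕ, J (k+1) = (2*(k:ℝ)+3)/((r:ℝ)+2*(k:ℝ)+2) * J k := by
    intro k
    have h := cospow_sinpow_rec (r-2) (2*k+2)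
    have hexp : 2*(k+1)+2 = (2*k+2)+2 := by omega
    rw [hJdef]
    simp only [hexp]
    rw [h, hcast]
    push_cast
    congr 1
    · congr 1 <;> ring
  have hJ0 : J 0 = 1/(r:ℝ) * (Real.sqrt π * Real.Gamma (((r:ℝ)-1)/2)
      / (2 * Real.Gamma ((r:ℝ)/2))) := by
    have h := cospow_sinpow_rec (r-2) 0
    have h2 : (∫ x in (0:ℝ)..(π/2), cos x ^ (r-2) * sin x ^ 0)
        = ∫ x in (0:ℝ)..(π/2), cos x ^ (r-2) := by
      apply intervalIntegral.integral_congr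
      intro x _
      simp
    rw [hJdef]
    show (∫ θ in (0:ℝ)..(π/2), cos θ ^ (r-2) * sin θ ^ (2*0+2)) = _
    norm_num
    rw [h, h2, cospow_gamma (r-2), hcast]
    rw [show ((r:ℝ)-2+1)/2 = ((r:ℝ)-1)/2 by ring, show ((r:ℝ)-2+2)/2 = (r:ℝ)/2 by ring]
    push_cast
    rw [show ((r:ℝ) - 2 + 0 + 2) = (r:ℝ) by ring]
    ring
  -- Step 5: termwise identity
  have hkey : ∀ k : ℕ, cc k / (2*(k:ℝ)+1) * J k = J 0 * grCoef r k := by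
    intro k
    induction k with
    | zero => simp [cc_zero, grCoef_zero]
    | succ k ih =>
      rw [hJrec k, cc_succ, grCoef_succ]
      push_cast
      have d1 : (2*(k:ℝ)+1) ≠ 0 := by positivity
      have d2 : (2*(k:ℝ)+2) ≠ 0 := by positivity
      have d3 : (2*(k:ℝ)+3) ≠ 0 := by positivity
      have d4 : ((r:ℝ)+2*(k:ℝ)+2) ≠ 0 := by positivity
      field_simp at ih ⊢
      linear_combination ((2*(k:ℝ)+1)*(2*(k:ℝ)+3)*(2*(k:ℝ)+2)*((r:ℝ)+2*(k:ℝ)+2)) * ih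
        - (9+54*(k:ℝ)+22*k*r+92*k^2+24*k^2*r+64*k^3+8*k^3*r+16*k^4+6*r) * ih
  simp_rw [hkey]
  -- Step 6: final constant identity
  have hG2 : 0 < Real.Gamma ((r:ℝ)/2) := Real.Gamma_pos_of_pos (by linarith)
  have hG3 : 0 < Real.Gamma (((r:ℝ)-1)/2) := Real.Gamma_pos_of_pos (by linarith)
  have hgam : Real.Gamma (((r:ℝ)+1)/2) = ((r:ℝ)-1)/2 * Real.Gamma (((r:ℝ)-1)/2) := by
    rw [show ((r:ℝ)+1)/2 = ((r:ℝ)-1)/2 + 1 by ring,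
      Real.Gamma_add_one (by intro h; rw [div_eq_zero_iff] at h; rcases h with h|h <;> linarith)]
  have hsums : ∀ k : ℕ, J 0 * grCoef r k * z^(2*k+1) = J 0 * (grCoef r k * z^(2*k+1)) :=
    fun k => by ring
  simp_rw [hsums]
  rw [tsum_mul_left]
  rw [Er]
  rw [Real.Gamma_one_half_eq, hJ0, hgam]
  have hsπ : (0:ℝ) < Real.sqrt π := Real.sqrt_pos.mpr pi_pos
  have hr0 : (0:ℝ) < (r:ℝ) := by linarith
  field_simp

end Aux

/-- Integral representation of `E_r` for `r ≥ 2` on `[−1,1]`. -/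
theorem Er_integral_repr (r : ℕ) (hr : 2 ≤ r) (z : ℝ) (hz : z ∈ Set.Icc (-1 : ℝ) 1) :
    Er r z
      = (2 * ((r : ℝ) - 1) * Real.Gamma (((r : ℝ) + 1) / 2) /
          (Real.Gamma (1 / 2) * Real.Gamma ((r : ℝ) / 2))) *
        ∫ θ in (0 : ℝ)..(π / 2),
          Real.cos θ ^ (r - 2) * Real.sin θ * Real.arcsin (z * Real.sin θ) := by
  rcases le_or_gt 0 z with hz0 | hz0
  · exact Er_integral_repr_nonneg r hr z hz0 hz.2
  · have hpos := Er_integral_repr_nonneg r hr (-z) (by linarith) (by linarith [hz.1])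
    have hEr : Er r z = - Er r (-z) := by
      have hterm : ∀ k : ℕ, grCoef r k * z ^ (2*k+1)
          = -(grCoef r k * (-z) ^ (2*k+1)) := by
        intro k
        have hodd : Odd (2*k+1) := ⟨k, by ring⟩
        rw [hodd.neg_pow]
        ring
      rw [Er, Er]
      simp_rw [hterm]
      rw [tsum_neg]
      ring
    have hInt : (∫ θ in (0:ℝ)..(π/2),
          Real.cos θ ^ (r-2) * Real.sin θ * Real.arcsin (z * Real.sin θ))
        = - ∫ θ in (0:ℝ)..(π/2),
            Real.cos θ ^ (r-2) * Real.sin θ * Real.arcsin ((-z) * Real.sin θ) := by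
      rw [← intervalIntegral.integral_neg]
      apply intervalIntegral.integral_congr
      intro θ _
      show Real.cos θ ^ (r-2) * Real.sin θ * Real.arcsin (z * Real.sin θ)
        = -(Real.cos θ ^ (r-2) * Real.sin θ * Real.arcsin (-z * Real.sin θ))
      rw [show -z * Real.sin θ = -(z * Real.sin θ) by ring, Real.arcsin_neg]
      ring
    rw [hEr, hInt, hpos]
    ring
end

section
/- Let λ ≥ 2, J the all-ones |V|×|V| matrix, and Z a positive semidefinite |V|×|V| matrix with Z(u,u) = λ−1 on the diagonal and Z(u,v) = −1 for edges. Define A = (λ−1)(J+Z)/(2λ) and B = ((λ−1)J − Z)/(2λ). Then the 2|V|×2|V| block matrix U = [[A,B],[B,A]] is positive semidefinite. -/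
open Matrix

lemma psd_smul {n : Type*} [Fintype n] {M : Matrix n n ℝ} (hM : M.PosSemidef)
    {c : ℝ} (hc : 0 ≤ c) : (c • M).PosSemidef := by
  refine PosSemidef.of_dotProduct_mulVec_nonneg ?_ (fun x => ?_)
  · unfold Matrix.IsHermitian
    rw [conjTranspose_smul, hM.1]
    simp
  · rw [smul_mulVec, dotProduct_smul, smul_eq_mul]
    exact mul_nonneg hc (hM.dotProduct_mulVec_nonneg x)

lemma psd_ones {n : Type*} [Fintype n] {J : Matrix n n ℝ} (hJ : ∀ u v, J u v = 1) :
    J.PosSemidef := by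
  refine PosSemidef.of_dotProduct_mulVec_nonneg ?_ (fun x => ?_)
  · ext i j; simp [Matrix.conjTranspose_apply, hJ]
  · have : (star x) ⬝ᵥ J.mulVec x = (∑ i, x i) * (∑ i, x i) := by
      simp only [dotProduct, mulVec, hJ, one_mul, star_trivial]
      rw [Finset.sum_mul]
    rw [this]
    exact mul_self_nonneg _
lemma psd_block_same {n : Type*} [Fintype n] {M : Matrix n n ℝ} (hM : M.PosSemidef) :
    (Matrix.fromBlocks M M M M).PosSemidef := by
  classical
  obtain ⟨L, rfl⟩ : ∃ L : Matrix n n ℝ, M = Lᴴ * L := by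
    open scoped MatrixOrder in exact CStarAlgebra.nonneg_iff_eq_star_mul_self.mp hM.nonneg
  have : Matrix.fromBlocks (Lᴴ * L) (Lᴴ * L) (Lᴴ * L) (Lᴴ * L)
      = (Matrix.fromBlocks L L 0 0)ᴴ * (Matrix.fromBlocks L L 0 0) := by
    rw [Matrix.fromBlocks_conjTranspose,
      Matrix.fromBlocks_multiply]
    simp
  rw [this]
  exact Matrix.posSemidef_conjTranspose_mul_self _

lemma psd_block_neg {n : Type*} [Fintype n] {M : Matrix n n ℝ} (hM : M.PosSemidef) :
    (Matrix.fromBlocks M (-M) (-M) M).PosSemidef := by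
  classical
  obtain ⟨L, rfl⟩ : ∃ L : Matrix n n ℝ, M = Lᴴ * L := by
    open scoped MatrixOrder in exact CStarAlgebra.nonneg_iff_eq_star_mul_self.mp hM.nonneg
  have : Matrix.fromBlocks (Lᴴ * L) (-(Lᴴ * L)) (-(Lᴴ * L)) (Lᴴ * L)
      = (Matrix.fromBlocks L (-L) 0 0)ᴴ * (Matrix.fromBlocks L (-L) 0 0) := by
    rw [Matrix.fromBlocks_conjTranspose,
      Matrix.fromBlocks_multiply]
    simp [Matrix.mul_neg, Matrix.neg_mul]
  rw [this]
  exact Matrix.posSemidef_conjTranspose_mul_self _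

/-- Let `λ ≥ 2`, `J` the all-ones matrix, and `Z` positive semidefinite with `Z(u,u) = λ − 1`
and `Z(u,v) = −1` on edges. With `A = (λ−1)(J+Z)/(2λ)` and `B = ((λ−1)J − Z)/(2λ)`, the
block matrix `U = [[A,B],[B,A]]` is positive semidefinite. -/
theorem block_matrix_posSemidef {V : Type*} [Fintype V] (G : SimpleGraph V)
    (lam : ℝ) (hlam : 2 ≤ lam) (Z : Matrix V V ℝ) (hZ : Z.PosSemidef)
    (hdiag : ∀ u, Z u u = lam - 1) (hedge : ∀ u v, G.Adj u v → Z u v = -1)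
    (J : Matrix V V ℝ) (hJ : ∀ u v, J u v = 1)
    (A B : Matrix V V ℝ)
    (hA : A = (2 * lam)⁻¹ • ((lam - 1) • (J + Z)))
    (hB : B = (2 * lam)⁻¹ • ((lam - 1) • J - Z)) :
    (Matrix.fromBlocks A B B A).PosSemidef := by
  have hlam0 : (0:ℝ) < lam := by linarith
  have h2lam : (0:ℝ) < (2 * lam)⁻¹ := by positivity
  -- A + B and A - B
  have hABsum : A + B = ((2 * lam)⁻¹ * (2 * (lam - 1))) • J + ((2 * lam)⁻¹ * (lam - 2)) • Z := by
    rw [hA, hB]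
    ext i j
    simp [Matrix.add_apply, Matrix.smul_apply, Matrix.sub_apply, smul_eq_mul]
    ring
  have hABdiff : A - B = ((2 * lam)⁻¹ * lam) • Z := by
    rw [hA, hB]
    ext i j
    simp [Matrix.add_apply, Matrix.smul_apply, Matrix.sub_apply, smul_eq_mul]
    ring
  have hS : (A + B).PosSemidef := by
    rw [hABsum]
    have h1 : (0:ℝ) ≤ (2 * lam)⁻¹ * (2 * (lam - 1)) := by
      apply mul_nonneg h2lam.le; linarith
    have h2 : (0:ℝ) ≤ (2 * lam)⁻¹ * (lam - 2) := by
      apply mul_nonneg h2lam.le; linarith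
    exact (psd_smul (psd_ones hJ) h1).add (psd_smul hZ h2)
  have hD : (A - B).PosSemidef := by
    rw [hABdiff]
    exact psd_smul hZ (by positivity)
  -- decompose the block matrix
  have hdecomp : Matrix.fromBlocks A B B A
      = (2:ℝ)⁻¹ • (Matrix.fromBlocks (A+B) (A+B) (A+B) (A+B)
          + Matrix.fromBlocks (A-B) (-(A-B)) (-(A-B)) (A-B)) := by
    ext i j
    rcases i with i | i <;> rcases j with j | j <;>
      simp [Matrix.fromBlocks, Matrix.add_apply, Matrix.smul_apply, Matrix.sub_apply,
        Matrix.neg_apply, smul_eq_mul] <;> ring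
  rw [hdecomp]
  exact psd_smul ((psd_block_same hS).add (psd_block_neg hD)) (by norm_num)
end

section
/- Let G be a finite graph with at least one edge, λ = ϑ(Ḡ), and s,t : V → R^{2|V|} be vectors obtained from the Gram decomposition in Lemma 4.2's proof (with U as above). Then: s(u)·t(u) = 0 for all u; s(u)·s(u) = t(u)·t(u) = (λ−1)/2 for all u; s(u)·s(v) = t(u)·t(v) = 0 for edges {u,v}; and s(u)·t(v) = s(v)·t(u) = 1/2 for edges {u,v}. -/
open Finset Matrix

open scoped MatrixOrder in
theorem posSemidef_iff_eq_transpose_mul_self {n : Type*} [Fintype n] [DecidableEq n]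
    {A : Matrix n n ℝ} : A.PosSemidef ↔ ∃ B : Matrix n n ℝ, A = Bᴴ * B := by
  constructor
  · intro hA
    obtain ⟨B, hB⟩ := CStarAlgebra.nonneg_iff_eq_star_mul_self.mp hA.nonneg
    exact ⟨B, hB⟩
  · rintro ⟨B, rfl⟩
    exact posSemidef_conjTranspose_mul_self B

/-- For a graph `G` with at least one edge and a feasible solution `Z` of the semidefinite
program defining `ϑ(Ḡ)` with value `λ`, there are vectors `s(u), t(u) ∈ ℝ^(2|V|)` such that
`s(u)·t(u) = 0`, `s(u)·s(u) = t(u)·t(u) = (λ−1)/2`, and for edges `{u,v}`: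
`s(u)·s(v) = t(u)·t(v) = 0` and `s(u)·t(v) = s(v)·t(u) = 1/2`. -/
theorem exists_st_vectors {V : Type*} [Fintype V] (G : SimpleGraph V)
    (hE : ∃ u v, G.Adj u v)
    (lam : ℝ) (Z : Matrix V V ℝ) (hZ : Z.PosSemidef)
    (hdiag : ∀ u, Z u u = lam - 1) (hedge : ∀ u v, G.Adj u v → Z u v = -1) :
    ∃ s t : V → (V ⊕ V → ℝ),
      (∀ u, ∑ i, s u i * t u i = 0) ∧
      (∀ u, ∑ i, s u i * s u i = (lam - 1) / 2) ∧
      (∀ u, ∑ i, t u i * t u i = (lam - 1) / 2) ∧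
      (∀ u v, G.Adj u v → ∑ i, s u i * s v i = 0) ∧
      (∀ u v, G.Adj u v → ∑ i, t u i * t v i = 0) ∧
      (∀ u v, G.Adj u v → ∑ i, s u i * t v i = 1 / 2) ∧
      (∀ u v, G.Adj u v → ∑ i, s v i * t u i = 1 / 2) := by
  classical
  -- Z is symmetric
  have hsym : ∀ p q : V, Z p q = Z q p := by
    intro p q
    have := congrFun (congrFun hZ.1 p) q
    simpa [Matrix.conjTranspose_apply] using this.symm
  have hZquad : ∀ x : V → ℝ, 0 ≤ x ⬝ᵥ (Z *ᵥ x) := by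
    intro x
    have := hZ.dotProduct_mulVec_nonneg x
    simpa using this
  -- lam ≥ 2
  have hlam2 : 2 ≤ lam := by
    obtain ⟨u, v, huv⟩ := hE
    have h0 := hZquad (Pi.single u 1 + Pi.single v 1)
    rw [Matrix.mulVec_add, dotProduct_add, add_dotProduct, add_dotProduct] at h0
    simp [Matrix.mulVec_single, single_dotProduct] at h0
    have h1 := hdiag u
    have h2 := hdiag v
    have h3 := hedge u v huv
    have h4 := hedge v u huv.symm
    nlinarith [h0]
  have hlam0 : lam ≠ 0 := by linarith
  set a : ℝ := (lam - 1) / (2 * lam) with ha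
  set b : ℝ := (lam - 2) / (4 * lam) with hb
  have ha0 : 0 ≤ a := div_nonneg (by linarith) (by linarith)
  have hb0 : 0 ≤ b := div_nonneg (by linarith) (by linarith)
  set C : Matrix V V ℝ := Matrix.of (fun u v => a + b * Z u v) with hCdef
  have hC : C.PosSemidef := by
    refine Matrix.PosSemidef.of_dotProduct_mulVec_nonneg ?_ ?_
    · ext i j
      simp [hCdef, Matrix.conjTranspose_apply, hsym i j]
    · intro x
      have h1 : ∀ u, (C *ᵥ x) u = a * (∑ v, x v) + b * ((Z *ᵥ x) u) := by
        intro u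
        simp only [Matrix.mulVec, dotProduct, hCdef, Matrix.of_apply, Finset.mul_sum]
        rw [← Finset.sum_add_distrib]
        exact Finset.sum_congr rfl fun v _ => by ring
      have h2 : x ⬝ᵥ (C *ᵥ x) = a * (∑ v, x v) ^ 2 + b * (x ⬝ᵥ (Z *ᵥ x)) := by
        simp only [dotProduct, h1, mul_add, Finset.sum_add_distrib]
        congr 1
        · rw [sq, ← Finset.sum_mul]; ring
        · rw [Finset.mul_sum]
          exact Finset.sum_congr rfl fun u _ => by ring
      have hq := hZquad x
      have hs := sq_nonneg (∑ v, x v)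
      simp only [star_trivial]
      rw [h2]
      positivity
  obtain ⟨P, hP⟩ := posSemidef_iff_eq_transpose_mul_self.mp hC
  obtain ⟨Q, hQ⟩ := posSemidef_iff_eq_transpose_mul_self.mp hZ
  have hPC : ∀ u v, ∑ i, P i u * P i v = a + b * Z u v := by
    intro u v
    have := congrFun (congrFun hP u) v
    simpa [hCdef, Matrix.mul_apply, Matrix.conjTranspose_apply] using this.symm
  have hQZ : ∀ u v, ∑ i, Q i u * Q i v = Z u v := by
    intro u v
    have := congrFun (congrFun hQ u) v
    simpa [Matrix.mul_apply, Matrix.conjTranspose_apply] using this.symm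
  set s : V → (V ⊕ V → ℝ) :=
    fun u => Sum.elim (fun i => P i u) (fun i => Q i u / 2) with hs
  set t : V → (V ⊕ V → ℝ) :=
    fun u => Sum.elim (fun i => P i u) (fun i => -(Q i u / 2)) with ht
  have hQ4 : ∀ u v, ∑ i, Q i u / 2 * (Q i v / 2) = Z u v / 4 := by
    intro u v
    rw [← hQZ u v]
    rw [Finset.sum_div]
    exact Finset.sum_congr rfl fun i _ => by ring
  have hss : ∀ u v, ∑ i, s u i * s v i = a + b * Z u v + Z u v / 4 := by
    intro u v
    rw [Fintype.sum_sum_type]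
    simp only [hs, Sum.elim_inl, Sum.elim_inr]
    rw [hPC u v, hQ4 u v]
  have htt : ∀ u v, ∑ i, t u i * t v i = a + b * Z u v + Z u v / 4 := by
    intro u v
    rw [Fintype.sum_sum_type]
    simp only [ht, Sum.elim_inl, Sum.elim_inr, neg_mul_neg]
    rw [hPC u v, hQ4 u v]
  have hst : ∀ u v, ∑ i, s u i * t v i = a + b * Z u v - Z u v / 4 := by
    intro u v
    rw [Fintype.sum_sum_type]
    simp only [hs, ht, Sum.elim_inl, Sum.elim_inr, mul_neg]
    rw [Finset.sum_neg_distrib, hPC u v, hQ4 u v]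
    ring
  refine ⟨s, t, ?_, ?_, ?_, ?_, ?_, ?_, ?_⟩
  · intro u
    rw [hst u u, hdiag u, ha, hb]
    field_simp
    ring
  · intro u
    rw [hss u u, hdiag u, ha, hb]
    field_simp
    ring
  · intro u
    rw [htt u u, hdiag u, ha, hb]
    field_simp
    ring
  · intro u v huv
    rw [hss u v, hedge u v huv, ha, hb]
    field_simp
    ring
  · intro u v huv
    rw [htt u v, hedge u v huv, ha, hb]
    field_simp
    ring
  · intro u v huv
    rw [hst u v, hedge u v huv, ha, hb]
    field_simp
    ring
  · intro u v huv
    rw [hst v u, hedge v u huv.symm, ha, hb]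
    field_simp
    ring
end
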